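/- Uniqueness of recovery: if Σ_{j=1}^M γ_j cos(φ_j t) = Σ_{j=1}^M δ_j cos(ψ_j t) for all t of the form h(2k+1)/2 with k = 0,…,2M−1, where φ_j, ψ_j ∈ [0, π/h) are each pairwise distinct families and γ_j, δ_j ∈ ℝ \ {0}, then M-term representations coincide: {(φ_j, γ_j)} = {(ψ_j, δ_j)} as sets. -/

import Mathlib

open Finset Real
open Polynomial

noncomputable def pc : ℕ → Polynomial ℝ
  | 0 => 1
  | 1 => 2 * X - 1
  | (n + 2) => 2 * X * pc (n + 1) - pc n

lemma pc_eval : ∀ (k : ℕ) (α : ℝ),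
    Real.cos α * (pc k).eval (Real.cos (2 * α)) = Real.cos ((2 * (k : ℝ) + 1) * α)
  | 0, α => by norm_num [pc]
  | 1, α => by
      simp only [pc, eval_sub, eval_mul, eval_ofNat, eval_X, eval_one]
      rw [show (2 * ((1:ℕ):ℝ) + 1) * α = 2 * α + α by push_cast; ring, Real.cos_add,
        Real.cos_two_mul, Real.sin_two_mul]
      have := Real.sin_sq_add_cos_sq α
      linear_combination (2 * Real.cos α) * this
  | (n + 2), α => by
      have h1 := pc_eval (n + 1) α
      have h0 := pc_eval n α
      have e1 := Real.cos_add ((2 * ((n:ℝ)+1) + 1) * α) (2 * α)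
      have e2 := Real.cos_sub ((2 * ((n:ℝ)+1) + 1) * α) (2 * α)
      have c1 : (2 * ((n:ℝ)+1) + 1) * α + 2 * α = (2 * ((n:ℝ)+2) + 1) * α := by ring
      have c2 : (2 * ((n:ℝ)+1) + 1) * α - 2 * α = (2 * (n:ℝ) + 1) * α := by ring
      rw [c1] at e1
      rw [c2] at e2
      simp only [pc, eval_sub, eval_mul, eval_ofNat, eval_X]
      push_cast at h1 h0 ⊢
      linear_combination 2 * Real.cos (2*α) * h1 - h0 - e1 - e2

lemma two_X_eq : (2 * X : ℝ[X]) = C 2 * X := by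
  rw [map_ofNat C 2]

lemma pc_coeff_deg : ∀ k : ℕ, (pc k).coeff k = 2 ^ k ∧ (pc k).degree ≤ k
  | 0 => by simp [pc]
  | 1 => by
      refine ⟨by simp [pc, Polynomial.coeff_one], ?_⟩
      have : (2 * X - 1 : ℝ[X]) = C 2 * X + C (-1) := by
        rw [two_X_eq, map_neg, map_one]; ring
      rw [pc, this]
      exact (Polynomial.degree_linear (by norm_num)).le
  | (n + 2) => by
      obtain ⟨hc1, hd1⟩ := pc_coeff_deg (n + 1)
      obtain ⟨hc0, hd0⟩ := pc_coeff_deg n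
      have hrw : pc (n + 2) = C 2 * (X * pc (n + 1)) - pc n := by
        rw [pc, two_X_eq, mul_assoc]
      constructor
      · rw [hrw, Polynomial.coeff_sub, Polynomial.coeff_C_mul, Polynomial.coeff_X_mul,
          hc1, Polynomial.coeff_eq_zero_of_degree_lt
            (lt_of_le_of_lt hd0 (by exact_mod_cast Nat.lt_succ_of_lt (Nat.lt_succ_self n)))]
        ring
      · rw [hrw]
        refine (Polynomial.degree_sub_le _ _).trans (max_le ?_ ?_)
        · refine (Polynomial.degree_mul_le _ _).trans ?_
          have h2 : (C 2 : ℝ[X]).degree ≤ 0 := Polynomial.degree_C_le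
          have hX : (X * pc (n+1) : ℝ[X]).degree ≤ (n + 2 : ℕ) := by
            refine (Polynomial.degree_mul_le _ _).trans ?_
            rw [Polynomial.degree_X]
            calc (1 : WithBot ℕ) + (pc (n+1)).degree ≤ 1 + (n+1 : ℕ) := by
                  exact add_le_add_right hd1 _
              _ = ((n + 2 : ℕ) : WithBot ℕ) := by
                  push_cast; ring
          calc (C 2 : ℝ[X]).degree + (X * pc (n+1)).degree ≤ 0 + ((n+2:ℕ) : WithBot ℕ) :=
                add_le_add h2 hX
            _ = ((n+2:ℕ) : WithBot ℕ) := by rw [zero_add]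
        · exact hd0.trans (by exact_mod_cast Nat.le_succ_of_le (Nat.le_succ n))

lemma pc_span : ∀ (m : ℕ) (q : ℝ[X]), q.degree < m →
    q ∈ Submodule.span ℝ (pc '' Set.Iio m)
  | 0, q, hq => by
      have : q = 0 := by
        by_contra hne
        exact absurd (Polynomial.zero_le_degree_iff.mpr hne) (by simpa using hq.not_ge)
      simp [this]
  | (m + 1), q, hq => by
      obtain ⟨hc, hd⟩ := pc_coeff_deg m
      set c := q.coeff m with hcdef
      set q' := q - (c / 2 ^ m) • pc m with hq'def
      have hq'deg : q'.degree < m := by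
        rw [Polynomial.degree_lt_iff_coeff_zero]
        intro k hk
        rcases eq_or_lt_of_le hk with hkm | hkm
        · rw [hq'def, Polynomial.coeff_sub, Polynomial.coeff_smul, ← hkm, hc, ← hcdef]
          simp only [smul_eq_mul]
          field_simp
          ring
        · have hqk : q.coeff k = 0 := Polynomial.coeff_eq_zero_of_degree_lt
            (hq.trans_le (by exact_mod_cast hkm))
          have hpk : (pc m).coeff k = 0 := Polynomial.coeff_eq_zero_of_degree_lt
            (hd.trans_lt (by exact_mod_cast hkm))
          rw [hq'def, Polynomial.coeff_sub, Polynomial.coeff_smul, hqk, hpk]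
          simp
      have h1 : q' ∈ Submodule.span ℝ (pc '' Set.Iio (m + 1)) :=
        Submodule.span_mono (Set.image_mono (fun x hx => lt_trans hx (Nat.lt_succ_self m)))
          (pc_span m q' hq'deg)
      have h2 : pc m ∈ Submodule.span ℝ (pc '' Set.Iio (m + 1)) :=
        Submodule.subset_span ⟨m, Nat.lt_succ_self m, rfl⟩
      have : q = q' + (c / 2 ^ m) • pc m := by rw [hq'def]; ring
      rw [this]
      exact Submodule.add_mem _ h1 (Submodule.smul_mem _ _ h2)

lemma key_lemma (M : ℕ) (S : Finset ℝ) (hcard : S.card ≤ 2 * M) (c u w : ℝ → ℝ)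
    (hu : ∀ x ∈ S, u x ≠ 0) (hw : Set.InjOn w S)
    (heq : ∀ k < 2 * M, ∑ x ∈ S, c x * (u x * (pc k).eval (w x)) = 0) :
    ∀ x ∈ S, c x = 0 := by
  intro x hx
  -- the linear functional
  set L : ℝ[X] →ₗ[ℝ] ℝ := ∑ y ∈ S, (c y * u y) • (Polynomial.leval (w y)) with hL
  have hLval : ∀ q : ℝ[X], L q = ∑ y ∈ S, c y * (u y * q.eval (w y)) := by
    intro q
    rw [hL]
    simp [LinearMap.sum_apply, Polynomial.leval_apply, mul_assoc]
  have hker : ∀ q : ℝ[X], q.degree < (2 * M : ℕ) → L q = 0 := by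
    intro q hq
    have hsub : Submodule.span ℝ (pc '' Set.Iio (2 * M)) ≤ LinearMap.ker L := by
      rw [Submodule.span_le]
      rintro _ ⟨k, hk, rfl⟩
      simp only [SetLike.mem_coe, LinearMap.mem_ker]
      rw [hLval]
      exact heq k hk
    have := hsub (pc_span (2 * M) q hq)
    simpa using this
  -- the interpolation polynomial
  set Q : ℝ[X] := ∏ y ∈ S.erase x, (X - C (w y)) with hQ
  have hQdeg : Q.degree < (2 * M : ℕ) := by
    have hmon : Q.Monic := monic_prod_of_monic _ _ (fun y _ => monic_X_sub_C (w y))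
    have hnd : Q.natDegree = (S.erase x).card := by
      rw [hQ, Polynomial.natDegree_prod _ _ (fun y _ => X_sub_C_ne_zero (w y))]
      simp [Polynomial.natDegree_X_sub_C]
    have hlt : Q.natDegree < 2 * M := by
      rw [hnd, Finset.card_erase_of_mem hx]
      have h1 : 1 ≤ S.card := Finset.card_pos.mpr ⟨x, hx⟩
      omega
    calc Q.degree ≤ Q.natDegree := Polynomial.degree_le_natDegree
        _ < (2*M : ℕ) := by exact_mod_cast hlt
  have hLQ := hker Q hQdeg
  rw [hLval] at hLQ
  have hsum : ∑ y ∈ S, c y * (u y * Q.eval (w y)) = c x * (u x * Q.eval (w x)) := by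
    rw [Finset.sum_eq_single_of_mem x hx]
    intro y hy hyx
    have : Q.eval (w y) = 0 := by
      rw [hQ, Polynomial.eval_prod]
      exact Finset.prod_eq_zero (Finset.mem_erase.mpr ⟨hyx, hy⟩) (by simp)
    rw [this]
    ring
  rw [hsum] at hLQ
  have hQx : Q.eval (w x) ≠ 0 := by
    rw [hQ, Polynomial.eval_prod]
    apply Finset.prod_ne_zero_iff.mpr
    intro y hy
    simp only [Polynomial.eval_sub, Polynomial.eval_X, Polynomial.eval_C, sub_ne_zero]
    exact fun hxy => (Finset.mem_erase.mp hy).1 (hw hx (Finset.mem_of_mem_erase hy) hxy).symm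
  have := mul_ne_zero (hu x hx) hQx
  rcases mul_eq_zero.mp hLQ with h | h
  · exact h
  · exact absurd h this

theorem uniqueness_of_cosine_sum_recovery (M : ℕ) (h : ℝ) (hh : 0 < h)
    (φ ψ : Fin M → ℝ) (γ δ : Fin M → ℝ)
    (hφ : ∀ j, φ j ∈ Set.Ico (0 : ℝ) (π / h)) (hψ : ∀ j, ψ j ∈ Set.Ico (0 : ℝ) (π / h))
    (hφinj : Function.Injective φ) (hψinj : Function.Injective ψ)
    (hγ : ∀ j, γ j ≠ 0) (hδ : ∀ j, δ j ≠ 0)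
    (heq : ∀ k < 2 * M,
      ∑ j, γ j * Real.cos (φ j * (h * (2 * (k : ℝ) + 1) / 2))
        = ∑ j, δ j * Real.cos (ψ j * (h * (2 * (k : ℝ) + 1) / 2))) :
    Set.range (fun j => (φ j, γ j)) = Set.range (fun j => (ψ j, δ j)) := by
  classical
  set S : Finset ℝ := (Finset.univ.image φ) ∪ (Finset.univ.image ψ) with hS
  set A : ℝ → ℝ := fun x => ∑ j ∈ Finset.univ.filter (fun j => φ j = x), γ j with hA
  set B : ℝ → ℝ := fun x => ∑ j ∈ Finset.univ.filter (fun j => ψ j = x), δ j with hB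
  have hSbound : ∀ x ∈ S, 0 ≤ x ∧ x < π / h := by
    intro x hx
    rcases Finset.mem_union.mp hx with hx | hx <;>
      obtain ⟨j, _, rfl⟩ := Finset.mem_image.mp hx
    · exact ⟨(hφ j).1, (hφ j).2⟩
    · exact ⟨(hψ j).1, (hψ j).2⟩
  have hxhπ : ∀ x ∈ S, 0 ≤ x * h ∧ x * h < π := by
    intro x hx
    obtain ⟨h0, h1⟩ := hSbound x hx
    exact ⟨mul_nonneg h0 hh.le, (lt_div_iff₀ hh).mp h1⟩
  have hu : ∀ x ∈ S, Real.cos (x * h / 2) ≠ 0 := by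
    intro x hx
    obtain ⟨h0, h1⟩ := hxhπ x hx
    have : Real.cos (x * h / 2) > 0 := Real.cos_pos_of_mem_Ioo
      ⟨by linarith [Real.pi_pos], by linarith⟩
    exact this.ne'
  have hw : Set.InjOn (fun x => Real.cos (x * h)) S := by
    intro x hx y hy hxy
    obtain ⟨hx0, hx1⟩ := hxhπ x hx
    obtain ⟨hy0, hy1⟩ := hxhπ y hy
    have := Real.injOn_cos ⟨hx0, hx1.le⟩ ⟨hy0, hy1.le⟩ hxy
    exact mul_right_cancel₀ hh.ne' this
  have hcard : S.card ≤ 2 * M := by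
    calc S.card ≤ (Finset.univ.image φ).card + (Finset.univ.image ψ).card :=
          Finset.card_union_le _ _
      _ ≤ M + M := add_le_add ((Finset.card_image_le).trans (by simp))
          ((Finset.card_image_le).trans (by simp))
      _ = 2 * M := by ring
  -- the sampled equations in polynomial form
  have hkey : ∀ x ∈ S, A x - B x = 0 := by
    apply key_lemma M S hcard _ _ _ hu hw
    intro k hk
    have hpt : ∀ x : ℝ, Real.cos (x * h / 2) * (pc k).eval (Real.cos (x * h))
        = Real.cos (x * (h * (2 * (k : ℝ) + 1) / 2)) := by
      intro x
      have := pc_eval k (x * h / 2)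
      rw [show 2 * (x * h / 2) = x * h by ring] at this
      rw [this, show (2 * (k:ℝ) + 1) * (x * h / 2) = x * (h * (2 * (k:ℝ) + 1) / 2) by ring]
    have hfib : ∀ (f : Fin M → ℝ) (c : Fin M → ℝ), Function.Injective f →
        (∀ j, f j ∈ S) →
        ∑ x ∈ S, (∑ j ∈ Finset.univ.filter (fun j => f j = x), c j) *
          Real.cos (x * (h * (2 * (k : ℝ) + 1) / 2))
          = ∑ j, c j * Real.cos (f j * (h * (2 * (k : ℝ) + 1) / 2)) := by
      intro f c hfinj hfS
      rw [← Finset.sum_fiberwise_of_maps_to (fun j _ => hfS j)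
        (fun j => c j * Real.cos (f j * (h * (2 * (k : ℝ) + 1) / 2)))]
      refine Finset.sum_congr rfl fun x hx => ?_
      rw [Finset.sum_mul]
      refine Finset.sum_congr rfl fun j hj => ?_
      rw [(Finset.mem_filter.mp hj).2]
    have hφS : ∀ j, φ j ∈ S := fun j => Finset.mem_union_left _
      (Finset.mem_image.mpr ⟨j, Finset.mem_univ j, rfl⟩)
    have hψS : ∀ j, ψ j ∈ S := fun j => Finset.mem_union_right _
      (Finset.mem_image.mpr ⟨j, Finset.mem_univ j, rfl⟩)
    calc ∑ x ∈ S, (A x - B x) * (Real.cos (x * h / 2) * (pc k).eval (Real.cos (x * h)))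
        = ∑ x ∈ S, ((A x) * Real.cos (x * (h * (2 * (k : ℝ) + 1) / 2))
            - (B x) * Real.cos (x * (h * (2 * (k : ℝ) + 1) / 2))) := by
          refine Finset.sum_congr rfl fun x hx => ?_
          rw [hpt x]; ring
      _ = ∑ x ∈ S, (A x) * Real.cos (x * (h * (2 * (k : ℝ) + 1) / 2))
            - ∑ x ∈ S, (B x) * Real.cos (x * (h * (2 * (k : ℝ) + 1) / 2)) :=
          Finset.sum_sub_distrib _ _
      _ = 0 := by
          rw [hA, hB, hfib φ γ hφinj hφS, hfib ψ δ hψinj hψS, heq k hk, sub_self]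
  -- evaluate A, B at the frequencies
  have hAφ : ∀ j0, A (φ j0) = γ j0 := by
    intro j0
    rw [hA]
    have : Finset.univ.filter (fun j => φ j = φ j0) = {j0} := by
      ext j; simp [hφinj.eq_iff]
    simp [this]
  have hBψ : ∀ j1, B (ψ j1) = δ j1 := by
    intro j1
    rw [hB]
    have : Finset.univ.filter (fun j => ψ j = ψ j1) = {j1} := by
      ext j; simp [hψinj.eq_iff]
    simp [this]
  have hφS : ∀ j, φ j ∈ S := fun j => Finset.mem_union_left _
    (Finset.mem_image.mpr ⟨j, Finset.mem_univ j, rfl⟩)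
  have hψS : ∀ j, ψ j ∈ S := fun j => Finset.mem_union_right _
    (Finset.mem_image.mpr ⟨j, Finset.mem_univ j, rfl⟩)
  apply Set.eq_of_subset_of_subset
  · rintro _ ⟨j0, rfl⟩
    have hAB : A (φ j0) = B (φ j0) := by
      have := hkey (φ j0) (hφS j0)
      linarith
    have hBne : B (φ j0) ≠ 0 := by rw [← hAB, hAφ j0]; exact hγ j0
    obtain ⟨j1, hj1mem, hj1ne⟩ := Finset.exists_ne_zero_of_sum_ne_zero hBne
    have hψj1 : ψ j1 = φ j0 := (Finset.mem_filter.mp hj1mem).2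
    refine ⟨j1, ?_⟩
    have : δ j1 = γ j0 := by
      have := hBψ j1
      rw [hψj1, ← hAB, hAφ j0] at this
      exact this.symm
    simp [hψj1, this]
  · rintro _ ⟨j1, rfl⟩
    have hAB : A (ψ j1) = B (ψ j1) := by
      have := hkey (ψ j1) (hψS j1)
      linarith
    have hAne : A (ψ j1) ≠ 0 := by rw [hAB, hBψ j1]; exact hδ j1
    obtain ⟨j0, hj0mem, hj0ne⟩ := Finset.exists_ne_zero_of_sum_ne_zero hAne
    have hφj0 : φ j0 = ψ j1 := (Finset.mem_filter.mp hj0mem).2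
    refine ⟨j0, ?_⟩
    have : γ j0 = δ j1 := by
      have := hAφ j0
      rw [hφj0, hAB, hBψ j1] at this
      exact this.symm
    simp [hφj0, this]
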